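/- Let X be a normal Tychonoff space such that X = X₁ ∪ ⋯ ∪ Xₙ, where each Xᵢ is a closed subspace of X which is connected modulo pseudocompactness (i.e., connected modulo the ideal 𝓤_{Xᵢ} in Xᵢ generated by the open subsets of Xᵢ with pseudocompact closure in Xᵢ). If X₁ ∩ ⋯ ∩ Xₙ is not pseudocompact, then X is connected modulo pseudocompactness (connected modulo 𝓤_X). -/

import Mathlib

open Set Topology

/-- An ideal in a set `X`: a nonempty collection of subsets of `X`, downward closed
and closed under finite unions. -/
def IsSetIdeal {X : Type*} (H : Set (Set X)) : Prop :=
  H.Nonempty ∧ (∀ A B : Set X, A ⊆ B → B ∈ H → A ∈ H) ∧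
    (∀ A B : Set X, A ∈ H → B ∈ H → A ∪ B ∈ H)

/-- A continuous map `f : X → [0,1]` is 2-valued modulo an ideal `H` if `f⁻¹(0) ∉ H`,
`f⁻¹(1) ∉ H`, and `X \ (f⁻¹(0) ∪ f⁻¹(1)) ∈ H`. -/
def TwoValuedMod {X : Type*} [TopologicalSpace X] (H : Set (Set X)) (f : X → ℝ) : Prop :=
  Continuous f ∧ (∀ x, f x ∈ Set.Icc (0 : ℝ) 1) ∧
    f ⁻¹' {0} ∉ H ∧ f ⁻¹' {1} ∉ H ∧ (f ⁻¹' {0} ∪ f ⁻¹' {1})ᶜ ∈ H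

/-- `X` is connected modulo the ideal `H` if there is no continuous `f : X → [0,1]`
that is 2-valued modulo `H`. -/
def ConnectedMod (X : Type*) [TopologicalSpace X] (H : Set (Set X)) : Prop :=
  ¬ ∃ f : X → ℝ, TwoValuedMod H f

/-- The ideal generated by a collection `𝓐` of subsets of `X`: all subsets of finite
unions of members of `𝓐`. -/
def GenIdeal {X : Type*} (𝓐 : Set (Set X)) : Set (Set X) :=
  {S | ∃ 𝓑 : Set (Set X), 𝓑 ⊆ 𝓐 ∧ 𝓑.Finite ∧ S ⊆ ⋃₀ 𝓑}

/-- A subset `S` of `X` is pseudocompact if every continuous real-valued function on the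
subspace `S` is bounded. -/
def IsPseudocompactSet {X : Type*} [TopologicalSpace X] (S : Set X) : Prop :=
  ∀ f : ↥S → ℝ, Continuous f → ∃ M : ℝ, ∀ y : ↥S, |f y| ≤ M

section AuxPcpt

variable {Y : Type*} [TopologicalSpace Y]

/-- In a normal space, a closed subset of a pseudocompact set is pseudocompact
(via the Tietze extension theorem). -/
lemma pcpt_of_subset_closed [NormalSpace Y] {F K : Set Y} (hF : IsClosed F)
    (hK : IsPseudocompactSet K) (hFK : F ⊆ K) : IsPseudocompactSet F := by
  intro g hg
  obtain ⟨G, hG⟩ := ContinuousMap.exists_restrict_eq hF (⟨g, hg⟩ : C(↥F, ℝ))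
  obtain ⟨M, hM⟩ := hK (fun y => G y.1) (G.continuous.comp continuous_subtype_val)
  refine ⟨M, fun y => ?_⟩
  have h1 : G y.1 = g y := by
    have := congrFun (congrArg DFunLike.coe hG) y
    simpa using this
  rw [← h1]; exact hM ⟨y.1, hFK y.2⟩

lemma pcpt_empty : IsPseudocompactSet (∅ : Set Y) :=
  fun _ _ => ⟨0, fun y => absurd y.2 (notMem_empty _)⟩

lemma pcpt_union {A B : Set Y} (hA : IsPseudocompactSet A) (hB : IsPseudocompactSet B) :
    IsPseudocompactSet (A ∪ B) := by
  intro g hg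
  obtain ⟨M₁, hM₁⟩ := hA (fun y => g ⟨y.1, Or.inl y.2⟩)
    (hg.comp (Continuous.subtype_mk continuous_subtype_val _))
  obtain ⟨M₂, hM₂⟩ := hB (fun y => g ⟨y.1, Or.inr y.2⟩)
    (hg.comp (Continuous.subtype_mk continuous_subtype_val _))
  refine ⟨max M₁ M₂, fun y => ?_⟩
  rcases y.2 with h | h
  · have := hM₁ ⟨y.1, h⟩
    have hy : (⟨y.1, Or.inl h⟩ : ↥(A ∪ B)) = y := Subtype.ext rfl
    rw [hy] at this
    exact this.trans (le_max_left _ _)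
  · have := hM₂ ⟨y.1, h⟩
    have hy : (⟨y.1, Or.inr h⟩ : ↥(A ∪ B)) = y := Subtype.ext rfl
    rw [hy] at this
    exact this.trans (le_max_right _ _)

lemma pcpt_sUnion {𝓒 : Set (Set Y)} (hfin : 𝓒.Finite) (h : ∀ C ∈ 𝓒, IsPseudocompactSet C) :
    IsPseudocompactSet (⋃₀ 𝓒) := by
  revert h
  refine Set.Finite.induction_on
    (motive := fun s _ => (∀ C ∈ s, IsPseudocompactSet C) → IsPseudocompactSet (⋃₀ s)) 𝓒 hfin (fun _ => by simpa using pcpt_empty) ?_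
  intro a s _ _ ih h
  rw [sUnion_insert]
  exact pcpt_union (h _ (mem_insert _ _)) (ih fun C hC => h C (Or.inr hC))

/-- Every member of the pseudocompactness ideal is contained in a closed pseudocompact set. -/
lemma exists_pcpt_superset {S : Set Y}
    (hS : S ∈ GenIdeal {U : Set Y | IsOpen U ∧ IsPseudocompactSet (closure U)}) :
    ∃ K : Set Y, IsClosed K ∧ IsPseudocompactSet K ∧ S ⊆ K := by
  obtain ⟨𝓑, h𝓑, hfin, hsub⟩ := hS
  refine ⟨⋃₀ (closure '' 𝓑), ?_, ?_, ?_⟩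
  · rw [sUnion_image]
    exact hfin.isClosed_biUnion fun B _ => isClosed_closure
  · exact pcpt_sUnion (hfin.image _) (by rintro t ⟨B, hB, rfl⟩; exact (h𝓑 hB).2)
  · refine hsub.trans ?_
    rintro x ⟨B, hB, hx⟩
    exact ⟨closure B, mem_image_of_mem _ hB, subset_closure hx⟩

end AuxPcpt

/-- Pseudocompactness of a set in a subspace is the same as pseudocompactness of its image. -/
lemma pcpt_image_iff {X : Type*} [TopologicalSpace X] {Y : Set X} {T : Set ↥Y} :
    IsPseudocompactSet T ↔ IsPseudocompactSet ((↑) '' T : Set X) := by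
  have hmemY : ∀ x : ↥((↑) '' T : Set X), x.1 ∈ Y := by
    rintro ⟨x, ⟨y, hy, rfl⟩⟩; exact y.2
  have hmemT : ∀ x : ↥((↑) '' T : Set X), (⟨x.1, hmemY x⟩ : ↥Y) ∈ T := by
    rintro ⟨x, hx⟩
    obtain ⟨y, hy, hyx⟩ := hx
    have : (⟨x, hmemY ⟨x, ⟨y, hy, hyx⟩⟩⟩ : ↥Y) = y := Subtype.ext hyx.symm
    rw [this]; exact hy
  set φ : ↥((↑) '' T : Set X) → ↥T := fun x => ⟨⟨x.1, hmemY x⟩, hmemT x⟩ with hφ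
  have hφc : Continuous φ :=
    Continuous.subtype_mk (Continuous.subtype_mk continuous_subtype_val _) _
  set ψ : ↥T → ↥((↑) '' T : Set X) := fun t => ⟨t.1.1, mem_image_of_mem _ t.2⟩ with hψ
  have hψc : Continuous ψ :=
    Continuous.subtype_mk (continuous_subtype_val.comp continuous_subtype_val) _
  constructor
  · intro hT f hf
    obtain ⟨M, hM⟩ := hT (f ∘ ψ) (hf.comp hψc)
    refine ⟨M, fun y => ?_⟩
    have : ψ (φ y) = y := Subtype.ext rfl
    have h2 := hM (φ y)
    simpa [Function.comp, this] using h2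
  · intro hI f hf
    obtain ⟨M, hM⟩ := hI (f ∘ φ) (hf.comp hφc)
    refine ⟨M, fun t => ?_⟩
    have : φ (ψ t) = t := Subtype.ext (Subtype.ext rfl)
    have h2 := hM (ψ t)
    simpa [Function.comp, this] using h2

/-- If a normal Tychonoff space `X` is `X₁ ∪ ⋯ ∪ Xₙ` with each `Xᵢ` a closed subspace
connected modulo pseudocompactness (modulo the ideal in `Xᵢ` generated by the open
subsets of `Xᵢ` with pseudocompact closure), and `X₁ ∩ ⋯ ∩ Xₙ` is not pseudocompact,
then `X` is connected modulo pseudocompactness. -/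
theorem connectedMod_pseudocompact_of_finite_union {X : Type*} [TopologicalSpace X]
    [NormalSpace X] [T35Space X]
    (n : ℕ) (hn : 0 < n) (Xs : Fin n → Set X)
    (hcl : ∀ i, IsClosed (Xs i))
    (hcover : ⋃ i, Xs i = Set.univ)
    (hconn : ∀ i, ConnectedMod ↥(Xs i)
      (GenIdeal {U : Set ↥(Xs i) | IsOpen U ∧ IsPseudocompactSet (closure U)}))
    (hnp : ¬ IsPseudocompactSet (⋂ i, Xs i)) :
    ConnectedMod X (GenIdeal {U : Set X | IsOpen U ∧ IsPseudocompactSet (closure U)}) := by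
  rintro ⟨f, hfc, hf01, hZ, hO, hM⟩
  set Z := f ⁻¹' {0} with hZdef
  set O := f ⁻¹' {1} with hOdef
  have hZc : IsClosed Z := isClosed_singleton.preimage hfc
  have hOc : IsClosed O := isClosed_singleton.preimage hfc
  obtain ⟨KM, hKMc, hKMp, hMK⟩ := exists_pcpt_superset hM
  obtain ⟨𝓑, h𝓑, h𝓑fin, hMsub⟩ := hM
  -- Key dichotomy on each piece
  have key : ∀ i, IsPseudocompactSet (Z ∩ Xs i) ∨ IsPseudocompactSet (O ∩ Xs i) := by
    intro i
    haveI : NormalSpace ↥(Xs i) := (hcl i).isClosedEmbedding_subtypeVal.normalSpace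
    set g : ↥(Xs i) → ℝ := f ∘ (↑) with hgdef
    have hgc : Continuous g := hfc.comp continuous_subtype_val
    -- the "middle" of g lies in the pseudocompactness ideal of Xs i
    have hmid : (g ⁻¹' {0} ∪ g ⁻¹' {1})ᶜ ∈
        GenIdeal {U : Set ↥(Xs i) | IsOpen U ∧ IsPseudocompactSet (closure U)} := by
      refine ⟨(fun B : Set X => ((↑) : ↥(Xs i) → X) ⁻¹' B) '' 𝓑, ?_, h𝓑fin.image _, ?_⟩
      · rintro t ⟨B, hB, rfl⟩
        refine ⟨(h𝓑 hB).1.preimage continuous_subtype_val, ?_⟩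
        -- closure of the preimage is pseudocompact
        rw [pcpt_image_iff]
        have himcl : IsClosed (((↑) : ↥(Xs i) → X) ''
            closure (((↑) : ↥(Xs i) → X) ⁻¹' B)) :=
          ((hcl i).isClosedEmbedding_subtypeVal.isClosedMap) _ isClosed_closure
        refine pcpt_of_subset_closed himcl (h𝓑 hB).2 ?_
        calc ((↑) : ↥(Xs i) → X) '' closure (((↑) : ↥(Xs i) → X) ⁻¹' B)
            ⊆ closure (((↑) : ↥(Xs i) → X) '' (((↑) : ↥(Xs i) → X) ⁻¹' B)) :=
              image_closure_subset_closure_image continuous_subtype_val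
          _ ⊆ closure B := closure_mono (image_preimage_subset _ _)
      · intro x hx
        have hxM : (x : X) ∈ (Z ∪ O)ᶜ := by
          intro hmem
          exact hx (by rcases hmem with h | h
                       · exact Or.inl h
                       · exact Or.inr h)
        obtain ⟨B, hB, hxB⟩ := hMsub hxM
        exact ⟨((↑) : ↥(Xs i) → X) ⁻¹' B, mem_image_of_mem _ hB, hxB⟩
    have hg01 : ∀ x, g x ∈ Set.Icc (0 : ℝ) 1 := fun x => hf01 _
    by_cases h0 : g ⁻¹' {0} ∈
        GenIdeal {U : Set ↥(Xs i) | IsOpen U ∧ IsPseudocompactSet (closure U)}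
    · left
      obtain ⟨K, hKc, hKp, hsubK⟩ := exists_pcpt_superset h0
      have h0c : IsClosed (g ⁻¹' {0}) := isClosed_singleton.preimage hgc
      have hp : IsPseudocompactSet (g ⁻¹' {0}) := pcpt_of_subset_closed h0c hKp hsubK
      have := pcpt_image_iff.mp hp
      have him : ((↑) : ↥(Xs i) → X) '' (g ⁻¹' {0}) = Z ∩ Xs i := by
        have heq : g ⁻¹' {0} = ((↑) : ↥(Xs i) → X) ⁻¹' Z := rfl
        rw [heq, Subtype.image_preimage_coe, inter_comm]
      rwa [him] at this
    by_cases h1 : g ⁻¹' {1} ∈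
        GenIdeal {U : Set ↥(Xs i) | IsOpen U ∧ IsPseudocompactSet (closure U)}
    · right
      obtain ⟨K, hKc, hKp, hsubK⟩ := exists_pcpt_superset h1
      have h1c : IsClosed (g ⁻¹' {1}) := isClosed_singleton.preimage hgc
      have hp : IsPseudocompactSet (g ⁻¹' {1}) := pcpt_of_subset_closed h1c hKp hsubK
      have := pcpt_image_iff.mp hp
      have him : ((↑) : ↥(Xs i) → X) '' (g ⁻¹' {1}) = O ∩ Xs i := by
        have heq : g ⁻¹' {1} = ((↑) : ↥(Xs i) → X) ⁻¹' O := rfl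
        rw [heq, Subtype.image_preimage_coe, inter_comm]
      rwa [him] at this
    exact absurd ⟨g, hgc, hg01, h0, h1, hmid⟩ (hconn i)
  -- Case analysis
  by_cases hZe : ∃ i, IsPseudocompactSet (Z ∩ Xs i)
  · by_cases hOe : ∃ j, IsPseudocompactSet (O ∩ Xs j)
    · obtain ⟨i, hi⟩ := hZe
      obtain ⟨j, hj⟩ := hOe
      apply hnp
      have hIc : IsClosed (⋂ k, Xs k) := isClosed_iInter hcl
      refine pcpt_of_subset_closed hIc (pcpt_union (pcpt_union hi hj) hKMp) ?_
      intro x hx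
      by_cases hx0 : f x = 0
      · exact Or.inl (Or.inl ⟨hx0, mem_iInter.mp hx i⟩)
      by_cases hx1 : f x = 1
      · exact Or.inl (Or.inr ⟨hx1, mem_iInter.mp hx j⟩)
      · refine Or.inr (hMK ?_)
        intro hmem
        rcases hmem with h | h
        · exact hx0 h
        · exact hx1 h
    · -- all pieces have pseudocompact zero set; then Z is in the ideal, contradiction
      push_neg at hOe
      have hallZ : ∀ i, IsPseudocompactSet (Z ∩ Xs i) := fun i => (key i).resolve_right (hOe i)
      have hZp : IsPseudocompactSet Z := by
        have hZeq : Z = ⋃₀ (Set.range fun i => Z ∩ Xs i) := by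
          rw [sUnion_range, ← inter_iUnion, hcover, inter_univ]
        rw [hZeq]
        exact pcpt_sUnion (finite_range _) (by rintro t ⟨i, rfl⟩; exact hallZ i)
      apply hZ
      set V := f ⁻¹' (Iio (1 / 2 : ℝ)) with hVdef
      have hVo : IsOpen V := isOpen_Iio.preimage hfc
      have hVclp : IsPseudocompactSet (closure V) := by
        refine pcpt_of_subset_closed isClosed_closure (pcpt_union hZp hKMp) ?_
        have h1 : closure V ⊆ f ⁻¹' (Iic (1 / 2 : ℝ)) :=
          closure_minimal (preimage_mono Iio_subset_Iic_self) (isClosed_Iic.preimage hfc)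
        intro x hx
        have hx2 := h1 hx
        by_cases hx0 : f x = 0
        · exact Or.inl hx0
        · refine Or.inr (hMK ?_)
          have hx1 : f x ≠ 1 := by
            intro h
            rw [mem_preimage, h] at hx2
            norm_num at hx2
          intro hmem
          rcases hmem with h | h
          · exact hx0 h
          · exact hx1 h
      refine ⟨{V}, by simpa using ⟨hVo, hVclp⟩, finite_singleton _, ?_⟩
      rw [sUnion_singleton]
      intro x hx
      have hx0 : f x = 0 := hx
      have : f x < 1 / 2 := by rw [hx0]; norm_num
      exact this
  · -- all pieces have pseudocompact one set; then O is in the ideal, contradiction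
    push_neg at hZe
    have hallO : ∀ i, IsPseudocompactSet (O ∩ Xs i) := fun i => (key i).resolve_left (hZe i)
    have hOp : IsPseudocompactSet O := by
      have hOeq : O = ⋃₀ (Set.range fun i => O ∩ Xs i) := by
        rw [sUnion_range, ← inter_iUnion, hcover, inter_univ]
      rw [hOeq]
      exact pcpt_sUnion (finite_range _) (by rintro t ⟨i, rfl⟩; exact hallO i)
    apply hO
    set V := f ⁻¹' (Ioi (1 / 2 : ℝ)) with hVdef
    have hVo : IsOpen V := isOpen_Ioi.preimage hfc
    have hVclp : IsPseudocompactSet (closure V) := by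
      refine pcpt_of_subset_closed isClosed_closure (pcpt_union hOp hKMp) ?_
      have h1 : closure V ⊆ f ⁻¹' (Ici (1 / 2 : ℝ)) :=
        closure_minimal (preimage_mono Ioi_subset_Ici_self) (isClosed_Ici.preimage hfc)
      intro x hx
      have hx2 := h1 hx
      by_cases hx1 : f x = 1
      · exact Or.inl hx1
      · refine Or.inr (hMK ?_)
        have hx0 : f x ≠ 0 := by
          intro h
          rw [mem_preimage, h] at hx2
          norm_num at hx2
        intro hmem
        rcases hmem with h | h
        · exact hx0 h
        · exact hx1 h
    refine ⟨{V}, by simpa using ⟨hVo, hVclp⟩, finite_singleton _, ?_⟩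
    rw [sUnion_singleton]
    intro x hx
    have hx1 : f x = 1 := hx
    have : f x > 1 / 2 := by rw [hx1]; norm_num
    exact this
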